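/- For the general sequential MRPE methodology P(ρ,k), under the limit operations m₀ → ∞, m = m₀k + 1 → ∞, c = c(m) = O(m^{-2r}), n* = O(m^r) for a fixed constant r > 1, and limsup m/n* < ρ, for any fixed 0 < ε < 1 and any fixed γ ≥ 2 for which E|S_m − σ|^γ = O(m^{-γ/2}), the left-tail probability of the final sample size satisfies P(N_{P(ρ,k)} ≤ ε n*) = O(n*^{−γ/(2r)}). -/

import Mathlib

open MeasureTheory ProbabilityTheory Filter Topology Asymptotics
open scoped NNReal ENNReal
open Real

namespace StmtAux

lemma integral_gaussianReal_eq (v : ℝ≥0) (hv : v ≠ 0) (f : ℝ → ℝ) :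
    ∫ x, f x ∂(gaussianReal 0 v) = ∫ x, gaussianPDFReal 0 v x * f x := by
  rw [gaussianReal_of_var_ne_zero _ hv]
  have h1 : (gaussianPDF 0 v) = fun x => ((Real.toNNReal (gaussianPDFReal 0 v x) : ℝ≥0) : ℝ≥0∞) :=
    rfl
  rw [h1, integral_withDensity_eq_integral_smul
    ((measurable_gaussianPDFReal 0 v).real_toNNReal) f]
  congr 1
  ext x
  rw [NNReal.smul_def, Real.coe_toNNReal _ (gaussianPDFReal_nonneg 0 v x), smul_eq_mul]

lemma integrable_gaussianReal_iff (v : ℝ≥0) (hv : v ≠ 0) (f : ℝ → ℝ) :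
    Integrable f (gaussianReal 0 v) ↔
      Integrable (fun x => gaussianPDFReal 0 v x * f x) volume := by
  rw [gaussianReal_of_var_ne_zero _ hv]
  have h1 : (gaussianPDF 0 v) = fun x => ((Real.toNNReal (gaussianPDFReal 0 v x) : ℝ≥0) : ℝ≥0∞) :=
    rfl
  rw [h1, integrable_withDensity_iff_integrable_smul
    ((measurable_gaussianPDFReal 0 v).real_toNNReal)]
  constructor <;> intro h <;> refine h.congr (Filter.Eventually.of_forall fun x => ?_) <;>
    simp only [NNReal.smul_def, Real.coe_toNNReal _ (gaussianPDFReal_nonneg 0 v x), smul_eq_mul]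



lemma integral_exp_sq_gaussian (v : ℝ≥0) (hv : 0 < (v:ℝ)) {t : ℝ} (ht : 2*t*v < 1) :
    Integrable (fun x => rexp (t * x^2)) (gaussianReal 0 v) ∧
    ∫ x, rexp (t * x^2) ∂(gaussianReal 0 v) = (Real.sqrt (1 - 2*t*v))⁻¹ := by
  have hu1 : (0:ℝ) < 1 - 2*t*v := by linarith
  set u1 : ℝ := 1 - 2*t*v with hu1def
  set w : ℝ≥0 := ⟨(v:ℝ)/u1, by positivity⟩ with hw
  have hwv : (w:ℝ) = v/u1 := rfl
  have hwpos : 0 < (w:ℝ) := by rw [hwv]; positivity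
  have hkey : (fun x => gaussianPDFReal 0 v x * rexp (t*x^2))
      = fun x => (Real.sqrt u1)⁻¹ * gaussianPDFReal 0 w x := by
    ext x
    rw [gaussianPDFReal, gaussianPDFReal, hwv]
    have e1 : -(x-0)^2/(2*(v:ℝ)) + t*x^2 = -(x-0)^2/(2*((v:ℝ)/u1)) := by
      field_simp
      ring
    have e2 : Real.sqrt (2*π*v) = Real.sqrt u1 * Real.sqrt (2*π*((v:ℝ)/u1)) := by
      rw [← Real.sqrt_mul hu1.le]
      congr 1
      field_simp
    rw [mul_assoc, ← Real.exp_add, e1, e2, mul_inv]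
    ring
  have hwne : w ≠ 0 := by
    intro h
    rw [h] at hwpos
    simp at hwpos
  have hvne : v ≠ 0 := by
    intro h
    rw [h] at hv
    simp at hv
  constructor
  · rw [integrable_gaussianReal_iff v hvne _, hkey]
    exact (integrable_gaussianPDFReal 0 w).const_mul _
  · rw [integral_gaussianReal_eq v hvne, hkey, integral_const_mul,
      integral_gaussianPDFReal_eq_one 0 hwne, mul_one]

lemma integral_exp_lin_gaussian (v : ℝ≥0) (hv : 0 < (v:ℝ)) (s : ℝ) :
    Integrable (fun x => rexp (s * x)) (gaussianReal 0 v) ∧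
    ∫ x, rexp (s * x) ∂(gaussianReal 0 v) = rexp (s^2*v/2) := by
  have hkey : (fun x => gaussianPDFReal 0 v x * rexp (s*x))
      = fun x => rexp (s^2*v/2) * gaussianPDFReal (s*v) v x := by
    ext x
    rw [gaussianPDFReal, gaussianPDFReal]
    have e1 : -(x-0)^2/(2*(v:ℝ)) + s*x = s^2*v/2 + -(x-s*v)^2/(2*(v:ℝ)) := by
      field_simp
      ring
    rw [mul_assoc, ← Real.exp_add, e1, Real.exp_add]
    ring
  have hvne : v ≠ 0 := by
    intro h
    rw [h] at hv
    simp at hv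
  constructor
  · rw [integrable_gaussianReal_iff v hvne _, hkey]
    exact (integrable_gaussianPDFReal (s*v) v).const_mul _
  · rw [integral_gaussianReal_eq v hvne, hkey, integral_const_mul,
      integral_gaussianPDFReal_eq_one (s*v) hvne, mul_one]



variable {Ω : Type*} [MeasurableSpace Ω] (P : Measure Ω)

lemma mgf_sq_of_gaussian (W : Ω → ℝ) (hW : Measurable W) (v : ℝ≥0) (hv : 0 < (v:ℝ))
    (hlaw : Measure.map W P = gaussianReal 0 v) {t : ℝ} (ht : 2*t*v < 1) :
    Integrable (fun ω => rexp (t * (W ω)^2)) P ∧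
      ∫ ω, rexp (t * (W ω)^2) ∂P = (Real.sqrt (1 - 2*t*v))⁻¹ := by
  have hf : Continuous (fun x : ℝ => rexp (t * x^2)) := by continuity
  have h1 := integral_exp_sq_gaussian v hv ht
  rw [← hlaw] at h1
  constructor
  · have := (integrable_map_measure (hf.aestronglyMeasurable) hW.aemeasurable).mp h1.1
    exact this
  · rw [← h1.2, integral_map hW.aemeasurable hf.aestronglyMeasurable]

lemma mgf_lin_of_gaussian (W : Ω → ℝ) (hW : Measurable W) (v : ℝ≥0) (hv : 0 < (v:ℝ))
    (hlaw : Measure.map W P = gaussianReal 0 v) (s : ℝ) :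
    Integrable (fun ω => rexp (s * W ω)) P ∧
      ∫ ω, rexp (s * W ω) ∂P = rexp (s^2*v/2) := by
  have hf : Continuous (fun x : ℝ => rexp (s * x)) := by continuity
  have h1 := integral_exp_lin_gaussian v hv s
  rw [← hlaw] at h1
  constructor
  · have := (integrable_map_measure (hf.aestronglyMeasurable) hW.aemeasurable).mp h1.1
    exact this
  · rw [← h1.2, integral_map hW.aemeasurable hf.aestronglyMeasurable]

lemma sq_sum_mgf [IsProbabilityMeasure P] (Z : ℕ → Ω → ℝ) (hZm : ∀ i, Measurable (Z i))
    (hZi : iIndepFun Z P) (v : ℝ≥0) (hv : 0 < (v:ℝ))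
    (hlaw : ∀ i, Measure.map (Z i) P = gaussianReal 0 v) {t : ℝ} (ht : 2*t*v < 1) (q : ℕ) :
    Integrable (fun ω => rexp (t * (∑ i ∈ Finset.range q, fun ω' => (Z i ω')^2) ω)) P ∧
      mgf (∑ i ∈ Finset.range q, fun ω' => (Z i ω')^2) P t
        = ((Real.sqrt (1 - 2*t*v))⁻¹)^q := by
  set Y : ℕ → Ω → ℝ := fun i ω => (Z i ω)^2 with hY
  have hYm : ∀ i, Measurable (Y i) := fun i => (hZm i).pow_const 2
  have hYi : iIndepFun Y P :=
    hZi.comp (fun _ => fun x : ℝ => x^2) (fun _ => measurable_id.pow_const 2)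
  have hint : ∀ i : ℕ, Integrable (fun ω => rexp (t * Y i ω)) P := fun i =>
    (mgf_sq_of_gaussian P (Z i) (hZm i) v hv (hlaw i) ht).1
  refine ⟨hYi.integrable_exp_mul_sum hYm (fun i _ => hint i), ?_⟩
  rw [hYi.mgf_sum hYm]
  rw [Finset.prod_congr rfl (fun i _ => ?_), Finset.prod_const, Finset.card_range]
  rw [mgf]
  exact (mgf_sq_of_gaussian P (Z i) (hZm i) v hv (hlaw i) ht).2

lemma lin_sum_mgf [IsProbabilityMeasure P] (Z : ℕ → Ω → ℝ) (hZm : ∀ i, Measurable (Z i))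
    (hZi : iIndepFun Z P) (v : ℝ≥0) (hv : 0 < (v:ℝ))
    (hlaw : ∀ i, Measure.map (Z i) P = gaussianReal 0 v) (s : ℝ) (q : ℕ) :
    Integrable (fun ω => rexp (s * (∑ i ∈ Finset.range q, Z i) ω)) P ∧
      mgf (∑ i ∈ Finset.range q, Z i) P s = (rexp (s^2*v/2))^q := by
  have hint : ∀ i : ℕ, Integrable (fun ω => rexp (s * Z i ω)) P := fun i =>
    (mgf_lin_of_gaussian P (Z i) (hZm i) v hv (hlaw i) s).1
  refine ⟨hZi.integrable_exp_mul_sum hZm (fun i _ => hint i), ?_⟩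
  rw [hZi.mgf_sum hZm]
  rw [Finset.prod_congr rfl (fun i _ => ?_), Finset.prod_const, Finset.card_range]
  rw [mgf]
  exact (mgf_lin_of_gaussian P (Z i) (hZm i) v hv (hlaw i) s).2



lemma chernoff_sq_lower [IsProbabilityMeasure P] (Z : ℕ → Ω → ℝ) (hZm : ∀ i, Measurable (Z i))
    (hZi : iIndepFun Z P) (v : ℝ≥0) (hv : 0 < (v:ℝ))
    (hlaw : ∀ i, Measure.map (Z i) P = gaussianReal 0 v) {t₀ : ℝ} (ht₀ : 0 ≤ t₀)
    (q : ℕ) (b : ℝ) :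
    (P {ω | (∑ i ∈ Finset.range q, fun ω' => (Z i ω')^2) ω ≤ b}).toReal
      ≤ rexp (t₀ * b) * ((Real.sqrt (1 + 2*t₀*v))⁻¹)^q := by
  have ht : 2*(-t₀)*v < 1 := by nlinarith
  have h := sq_sum_mgf P Z hZm hZi v hv hlaw ht q
  have h2 := measure_le_le_exp_mul_mgf (μ := P)
    (X := ∑ i ∈ Finset.range q, fun ω' => (Z i ω')^2) (t := -t₀) b
    (neg_nonpos.mpr ht₀) h.1
  rw [h.2] at h2
  have e1 : 1 - 2*(-t₀)*(v:ℝ) = 1 + 2*t₀*v := by ring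
  have e2 : -(-t₀) * b = t₀ * b := by ring
  rw [e1, e2] at h2
  exact h2

lemma chernoff_sq_upper [IsProbabilityMeasure P] (Z : ℕ → Ω → ℝ) (hZm : ∀ i, Measurable (Z i))
    (hZi : iIndepFun Z P) (v : ℝ≥0) (hv : 0 < (v:ℝ))
    (hlaw : ∀ i, Measure.map (Z i) P = gaussianReal 0 v) {t₃ : ℝ} (ht₃ : 0 ≤ t₃)
    (ht : 2*t₃*v < 1) (q : ℕ) (b : ℝ) :
    (P {ω | b ≤ (∑ i ∈ Finset.range q, fun ω' => (Z i ω')^2) ω}).toReal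
      ≤ rexp (-(t₃ * b)) * ((Real.sqrt (1 - 2*t₃*v))⁻¹)^q := by
  have h := sq_sum_mgf P Z hZm hZi v hv hlaw ht q
  have h2 := measure_ge_le_exp_mul_mgf (μ := P)
    (X := ∑ i ∈ Finset.range q, fun ω' => (Z i ω')^2) (t := t₃) b ht₃ h.1
  rw [h.2] at h2
  have e2 : -t₃ * b = -(t₃ * b) := by ring
  rw [e2] at h2
  exact h2

lemma chernoff_lin_upper [IsProbabilityMeasure P] (Z : ℕ → Ω → ℝ) (hZm : ∀ i, Measurable (Z i))
    (hZi : iIndepFun Z P) (v : ℝ≥0) (hv : 0 < (v:ℝ))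
    (hlaw : ∀ i, Measure.map (Z i) P = gaussianReal 0 v) {s : ℝ} (hs : 0 ≤ s)
    (q : ℕ) (b : ℝ) :
    (P {ω | b ≤ (∑ i ∈ Finset.range q, Z i) ω}).toReal
      ≤ rexp (-(s * b)) * (rexp (s^2*v/2))^q := by
  have h := lin_sum_mgf P Z hZm hZi v hv hlaw s q
  have h2 := measure_ge_le_exp_mul_mgf (μ := P)
    (X := ∑ i ∈ Finset.range q, Z i) (t := s) b hs h.1
  rw [h.2] at h2
  have e2 : -s * b = -(s * b) := by ring
  rw [e2] at h2
  exact h2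

lemma chernoff_lin_lower [IsProbabilityMeasure P] (Z : ℕ → Ω → ℝ) (hZm : ∀ i, Measurable (Z i))
    (hZi : iIndepFun Z P) (v : ℝ≥0) (hv : 0 < (v:ℝ))
    (hlaw : ∀ i, Measure.map (Z i) P = gaussianReal 0 v) {s : ℝ} (hs : 0 ≤ s)
    (q : ℕ) (b : ℝ) :
    (P {ω | (∑ i ∈ Finset.range q, Z i) ω ≤ -b}).toReal
      ≤ rexp (-(s * b)) * (rexp (s^2*v/2))^q := by
  have h := lin_sum_mgf P Z hZm hZi v hv hlaw (-s) q
  have h2 := measure_le_le_exp_mul_mgf (μ := P)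
    (X := ∑ i ∈ Finset.range q, Z i) (t := -s) (-b)
    (neg_nonpos.mpr hs) h.1
  rw [h.2] at h2
  have e2 : -(-s) * (-b) = -(s * b) := by ring
  have e3 : (-s)^2 = s^2 := by ring
  rw [e2, e3] at h2
  exact h2

lemma sum_sq_decomp (q : ℕ) (hq : q ≠ 0) (x : ℕ → ℝ) (b μ' : ℝ)
    (hb : b = (q:ℝ)⁻¹ * ∑ i ∈ Finset.range q, x i) :
    ∑ i ∈ Finset.range q, (x i - μ')^2
      = (∑ i ∈ Finset.range q, (x i - b)^2) + q*(b-μ')^2 := by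
  have hqR : (q:ℝ) ≠ 0 := Nat.cast_ne_zero.mpr hq
  have hsum : ∑ i ∈ Finset.range q, x i = q * b := by
    rw [hb]; field_simp
  have h1 : ∀ i ∈ Finset.range q,
      (x i - μ')^2 = (x i - b)^2 + (2*(b-μ')*(x i - b) + (b-μ')^2) := fun i _ => by ring
  rw [Finset.sum_congr rfl h1, Finset.sum_add_distrib, Finset.sum_add_distrib,
    ← Finset.mul_sum, Finset.sum_sub_distrib, hsum, Finset.sum_const, Finset.card_range]
  simp [nsmul_eq_mul]

lemma geom_sum_le' {x : ℝ} (hx0 : 0 ≤ x) (hx1 : x < 1) (n : ℕ) :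
    ∑ i ∈ Finset.range n, x^i ≤ (1-x)⁻¹ := by
  have hne : x ≠ 1 := ne_of_lt hx1
  have h1x : (0:ℝ) < 1 - x := by linarith
  calc ∑ i ∈ Finset.range n, x^i = (x^n - 1)/(x-1) := geom_sum_eq hne n
    _ = (1 - x^n)/(1-x) := by rw [← neg_div_neg_eq]; congr 1 <;> ring
    _ ≤ 1/(1-x) := by
        apply (div_le_div_iff_of_pos_right h1x).mpr
        nlinarith [pow_nonneg hx0 n]
    _ = (1-x)⁻¹ := one_div _

lemma geom_tail {x : ℝ} (hx0 : 0 ≤ x) (hx1 : x < 1) (a Q : ℕ) :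
    ∑ q ∈ Finset.Icc a Q, x^q ≤ x^a * (1-x)⁻¹ := by
  rw [← Finset.Ico_add_one_right_eq_Icc, Finset.sum_Ico_eq_sum_range]
  have h1 : ∀ i ∈ Finset.range (Q+1-a), x^(a+i) = x^a * x^i := fun i _ => pow_add x a i
  rw [Finset.sum_congr rfl h1, ← Finset.mul_sum]
  exact mul_le_mul_of_nonneg_left (geom_sum_le' hx0 hx1 _) (pow_nonneg hx0 a)



lemma aux_rho1_lt_one {θ : ℝ} (hθ0 : 0 < θ) (hθ1 : θ < 1) :
    rexp (θ*((1-θ)/(2*θ))/2) * (Real.sqrt (1+(1-θ)/(2*θ)))⁻¹ < 1 := by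
  set u : ℝ := (1-θ)/(2*θ) with hudef
  have hu0 : 0 < u := div_pos (by linarith) (by linarith)
  have hθu : 2*θ*u = 1-θ := by rw [hudef]; field_simp
  have hexpθu : rexp (θ*u) < 1 + u := by
    have h1 : rexp (θ*u) * (1-θ*u) ≤ 1 := by
      have h2 := Real.add_one_le_exp (-(θ*u))
      calc rexp (θ*u) * (1-θ*u) ≤ rexp (θ*u) * rexp (-(θ*u)) :=
            mul_le_mul_of_nonneg_left (by linarith) (Real.exp_pos _).le
        _ = 1 := by rw [← Real.exp_add]; simp
    nlinarith [Real.exp_pos (θ*u), mul_pos hθ0 hu0, sq_nonneg (1-θ)]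
  have hρ₁0 : 0 < rexp (θ*u/2) * (Real.sqrt (1+u))⁻¹ :=
    mul_pos (Real.exp_pos _) (inv_pos.mpr (Real.sqrt_pos.mpr (by linarith)))
  have hsq : (rexp (θ*u/2) * (Real.sqrt (1+u))⁻¹)^2 = rexp (θ*u) * (1+u)⁻¹ := by
    rw [mul_pow, inv_pow, Real.sq_sqrt (by linarith : (0:ℝ) ≤ 1+u), ← Real.exp_nat_mul]
    push_cast
    ring_nf
  have h3 : (rexp (θ*u/2) * (Real.sqrt (1+u))⁻¹)^2 < 1 := by
    rw [hsq, ← div_eq_mul_inv]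
    exact (div_lt_one (by linarith)).mpr hexpθu
  exact (pow_lt_one_iff_of_nonneg hρ₁0.le two_ne_zero).mp h3

lemma aux_rho3_lt_one : rexp (-(3/4)) * Real.sqrt 2 < 1 := by
  have h0 : 0 < rexp (-(3/4)) * Real.sqrt 2 :=
    mul_pos (Real.exp_pos _) (Real.sqrt_pos.mpr (by norm_num))
  have hsq : (rexp (-(3/4)) * Real.sqrt 2)^2 = rexp (-(3/2)) * 2 := by
    rw [mul_pow, Real.sq_sqrt (by norm_num : (0:ℝ) ≤ 2), ← Real.exp_nat_mul]
    push_cast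
    ring_nf
  have hee : rexp (-(3/2)) * rexp (3/2) = 1 := by rw [← Real.exp_add]; norm_num
  have h3 : (rexp (-(3/4)) * Real.sqrt 2)^2 < 1 := by
    rw [hsq]
    nlinarith [Real.add_one_le_exp (3/2 : ℝ), Real.exp_pos (-(3/2) : ℝ)]
  exact (pow_lt_one_iff_of_nonneg h0.le two_ne_zero).mp h3

end StmtAux



open StmtAux

set_option maxHeartbeats 2000000 in
/-- Left-tail bound for the final sample size of P(ρ,k): for fixed 0 < ε < 1 and γ ≥ 2
with `E|S_m − σ|^γ = O(m^{−γ/2})`, one has `P(N ≤ ε n*) = O(n*^{−γ/(2r)})`. -/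
theorem stmt_12
    {Ω : Type*} [MeasurableSpace Ω] (P : Measure Ω) [IsProbabilityMeasure P]
    (X : ℕ → Ω → ℝ) (μ σ A : ℝ) (hσ : 0 < σ) (hA : 0 < A)
    (hXmeas : ∀ i, Measurable (X i))
    (hXindep : iIndepFun X P)
    (hXlaw : ∀ i, Measure.map (X i) P = gaussianReal μ ⟨σ ^ 2, sq_nonneg σ⟩)
    (Xbar : ℕ → Ω → ℝ)
    (hXbar : ∀ n ω, Xbar n ω = (n : ℝ)⁻¹ * ∑ i ∈ Finset.range n, X i ω)
    (S : ℕ → Ω → ℝ)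
    (hS : ∀ n ω, S n ω =
      Real.sqrt (((n : ℝ) - 1)⁻¹ * ∑ i ∈ Finset.range n, (X i ω - Xbar n ω) ^ 2))
    (k : ℕ) (hk : 1 ≤ k) (ρ r : ℝ) (hρ0 : 0 < ρ) (hρ1 : ρ ≤ 1) (hr : 1 < r)
    (m₀ : ℕ → ℕ) (hm₀ : ∀ j, 1 ≤ m₀ j)
    (m : ℕ → ℕ) (hm : ∀ j, m j = m₀ j * k + 1)
    (c : ℕ → ℝ) (hc : ∀ j, 0 < c j)
    (nstar : ℕ → ℝ) (hnstar : ∀ j, nstar j = σ * Real.sqrt (A / c j))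
    (hm₀Top : Tendsto m₀ atTop atTop)
    (hcO : (fun j => c j) =O[atTop] fun j => (m j : ℝ) ^ (-(2 * r)))
    (hnO : (fun j => nstar j) =O[atTop] fun j => (m j : ℝ) ^ r)
    (hls : limsup (fun j => (m j : ℝ) / nstar j) atTop < ρ)
    (T : ℕ → Ω → ℕ)
    (hT : ∀ j ω, T j ω = sInf {n : ℕ |
      (m j : ℝ) + (k : ℝ) * n ≥ ρ * S (m j + k * n) ω * Real.sqrt (A / c j)})
    (N : ℕ → Ω → ℤ)
    (hN : ∀ j ω, N j ω = (⌈ρ⁻¹ * ((m j : ℝ) + (k : ℝ) * (T j ω : ℝ))⌉ - 1) + 1)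
    (ε γ : ℝ) (hε0 : 0 < ε) (hε1 : ε < 1) (hγ : 2 ≤ γ)
    (hmomγ : (fun j => ∫ ω, |S (m j) ω - σ| ^ γ ∂P) =O[atTop]
      fun j => (m j : ℝ) ^ (-(γ / 2))) :
    (fun j => (P {ω | (N j ω : ℝ) ≤ ε * nstar j}).toReal) =O[atTop]
      fun j => (nstar j) ^ (-(γ / (2 * r))) := by
  classical
  -- variance as ℝ≥0
  set v : ℝ≥0 := ⟨σ ^ 2, sq_nonneg σ⟩ with hvdef
  have hσ2 : (v : ℝ) = σ ^ 2 := rfl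
  have hv : 0 < (v : ℝ) := by rw [hσ2]; positivity
  -- centered variables
  set Z : ℕ → Ω → ℝ := fun i ω => X i ω - μ with hZdef
  have hZm : ∀ i, Measurable (Z i) := fun i => (hXmeas i).sub_const μ
  have hZi : iIndepFun Z P :=
    hXindep.comp (fun _ => fun x : ℝ => x - μ) (fun _ => measurable_id.sub_const μ)
  have hZlaw : ∀ i, Measure.map (Z i) P = gaussianReal 0 v := by
    intro i
    have h1 : Z i = (fun x : ℝ => x + (-μ)) ∘ X i := by
      ext ω; simp [hZdef, sub_eq_add_neg]
    rw [h1, ← Measure.map_map (measurable_add_const (-μ)) (hXmeas i), hXlaw i,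
      gaussianReal_map_add_const]
    norm_num
  -- constants
  set θ : ℝ := (1 + ε^2)/2 with hθdef
  set δ : ℝ := (1 - ε^2)/2 with hδdef
  have hθ0 : 0 < θ := by rw [hθdef]; nlinarith
  have hθ1 : θ < 1 := by rw [hθdef]; nlinarith
  have hδ0 : 0 < δ := by rw [hδdef]; nlinarith
  set u : ℝ := (1-θ)/(2*θ) with hudef
  have hu0 : 0 < u := div_pos (by linarith) (by linarith)
  set t₀ : ℝ := u/(2*σ^2) with ht₀def
  have ht₀ : 0 ≤ t₀ := by rw [ht₀def]; positivity
  set a : ℝ := Real.sqrt δ with hadef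
  have ha0 : 0 < a := Real.sqrt_pos.mpr hδ0
  have ha2 : a^2 = δ := Real.sq_sqrt hδ0.le
  set s : ℝ := a/σ with hsdef
  have hs0 : 0 ≤ s := by rw [hsdef]; positivity
  set t₃ : ℝ := (4*σ^2)⁻¹ with ht₃def
  have ht₃0 : 0 ≤ t₃ := by rw [ht₃def]; positivity
  have ht₃v : 2*t₃*(v:ℝ) = 1/2 := by
    rw [ht₃def, hσ2]; field_simp; ring
  set ρ₁ : ℝ := rexp (θ*u/2) * (Real.sqrt (1+u))⁻¹ with hρ₁def
  set ρ₂ : ℝ := rexp (-(δ/2)) with hρ₂def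
  set ρ₃ : ℝ := rexp (-(3/4)) * Real.sqrt 2 with hρ₃def
  have hρ₁0 : 0 < ρ₁ := by
    rw [hρ₁def]
    exact mul_pos (Real.exp_pos _) (inv_pos.mpr (Real.sqrt_pos.mpr (by linarith)))
  have hρ₂0 : 0 < ρ₂ := Real.exp_pos _
  have hρ₃0 : 0 < ρ₃ := by
    rw [hρ₃def]
    exact mul_pos (Real.exp_pos _) (Real.sqrt_pos.mpr (by norm_num))
  have hρ₁1 : ρ₁ < 1 := by rw [hρ₁def, hudef]; exact aux_rho1_lt_one hθ0 hθ1
  have hρ₂1 : ρ₂ < 1 := by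
    rw [hρ₂def, ← Real.exp_zero]
    exact Real.exp_lt_exp.mpr (by linarith)
  have hρ₃1 : ρ₃ < 1 := by rw [hρ₃def]; exact aux_rho3_lt_one
  set ρb : ℝ := max ρ₁ (max ρ₂ ρ₃) with hρbdef
  have hρb0 : 0 < ρb := lt_of_lt_of_le hρ₁0 (le_max_left _ _)
  have hρb1 : ρb < 1 := max_lt hρ₁1 (max_lt hρ₂1 hρ₃1)
  set Kbar : ℝ := 3*(1-ρb)⁻¹ + 1 with hKdef
  -- the key bound
  have key : ∀ j, 4 ≤ m j →
      (P {ω | (N j ω : ℝ) ≤ ε * nstar j}).toReal ≤ Kbar * ρb^(m j) := by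
    intro j hmj4
    have hsqp : 0 < Real.sqrt (A / c j) := Real.sqrt_pos.mpr (div_pos hA (hc j))
    have hns0 : 0 < nstar j := by rw [hnstar]; positivity
    set Q₁ : ℕ := ⌊nstar j⌋₊ with hQ₁def
    set n₂ : ℕ := ⌈2 * nstar j⌉₊ with hn₂def
    set Q₂ : ℕ := m j + k * n₂ with hQ₂def
    set Aev : ℕ → Set Ω := fun q =>
      {ω | (∑ i ∈ Finset.range q, fun ω' => (Z i ω')^2) ω ≤ θ*σ^2*(q:ℝ)} with hAdef
    set Bp : ℕ → Set Ω := fun q =>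
      {ω | a*σ*(q:ℝ) ≤ (∑ i ∈ Finset.range q, Z i) ω} with hBpdef
    set Bm : ℕ → Set Ω := fun q =>
      {ω | (∑ i ∈ Finset.range q, Z i) ω ≤ -(a*σ*(q:ℝ))} with hBmdef
    set Cev : Set Ω :=
      {ω | 3*σ^2*(Q₂:ℝ) ≤ (∑ i ∈ Finset.range Q₂, fun ω' => (Z i ω')^2) ω} with hCdef
    -- pointwise inclusion
    have hincl : {ω | (N j ω : ℝ) ≤ ε * nstar j} ⊆
        (⋃ q ∈ Finset.Icc (m j) Q₁, (Aev q ∪ Bp q ∪ Bm q)) ∪ Cev := by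
      intro ω hω
      simp only [Set.mem_setOf_eq] at hω
      by_cases hne : {n : ℕ | (m j : ℝ) + (k : ℝ) * n
          ≥ ρ * S (m j + k * n) ω * Real.sqrt (A / c j)}.Nonempty
      ·
        have hTmem : T j ω ∈ {n : ℕ | (m j : ℝ) + (k : ℝ) * n
            ≥ ρ * S (m j + k * n) ω * Real.sqrt (A / c j)} := by
          rw [hT j ω]; exact Nat.sInf_mem hne
        set q : ℕ := m j + k * T j ω with hqdef
        have hstop : ρ * S q ω * Real.sqrt (A / c j) ≤ (m j : ℝ) + (k:ℝ) * (T j ω) := hTmem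
        have hqcast : (q:ℝ) = (m j : ℝ) + (k:ℝ)*(T j ω) := by rw [hqdef]; push_cast; ring
        have hNv : (N j ω : ℝ) = ((⌈ρ⁻¹ * ((m j : ℝ) + (k : ℝ) * (T j ω : ℝ))⌉ : ℤ) : ℝ) := by
          rw [hN j ω]; push_cast; ring
        have hxle : ρ⁻¹ * ((m j : ℝ) + (k:ℝ)*(T j ω)) ≤ ε * nstar j :=
          le_trans (Int.le_ceil _) (by rw [← hNv]; exact hω)
        have hqle : (q:ℝ) ≤ ρ * (ε * nstar j) := by
          rw [hqcast]
          calc (m j : ℝ) + (k:ℝ)*(T j ω)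
              = ρ * (ρ⁻¹ * ((m j:ℝ) + (k:ℝ)*(T j ω))) := by
                field_simp
            _ ≤ ρ * (ε * nstar j) := mul_le_mul_of_nonneg_left hxle hρ0.le
        have hqle' : (q:ℝ) ≤ nstar j := hqle.trans (by nlinarith only [hρ0, hρ1, hε0, hε1, hns0, mul_pos hε0 hns0])
        have hqQ₁ : q ≤ Q₁ := Nat.le_floor hqle'
        have hqm : m j ≤ q := Nat.le_add_right _ _
        have hq4 : 4 ≤ q := le_trans hmj4 hqm
        have hq4R : (4:ℝ) ≤ (q:ℝ) := by exact_mod_cast hq4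
        have hSle : S q ω ≤ ε*σ := by
          rw [← hqcast] at hstop
          rw [hnstar j] at hqle
          have h5 : ρ * S q ω * Real.sqrt (A/c j) ≤ ρ * (ε*σ) * Real.sqrt (A/c j) := by
            calc ρ * S q ω * Real.sqrt (A/c j) ≤ (q:ℝ) := hstop
              _ ≤ ρ * (ε * (σ * Real.sqrt (A/c j))) := hqle
              _ = ρ * (ε*σ) * Real.sqrt (A/c j) := by ring
          nlinarith only [h5, mul_pos hρ0 hsqp]
        have hz : ((q:ℝ)-1)⁻¹ * ∑ i ∈ Finset.range q, (X i ω - Xbar q ω)^2 ≤ (ε*σ)^2 := by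
          have h6 : Real.sqrt (((q:ℝ)-1)⁻¹
              * ∑ i ∈ Finset.range q, (X i ω - Xbar q ω)^2) ≤ ε*σ := by
            rw [← hS]; exact hSle
          exact (Real.sqrt_le_iff.mp h6).2
        have hWle : ∑ i ∈ Finset.range q, (X i ω - Xbar q ω)^2 ≤ (ε*σ)^2*((q:ℝ)-1) := by
          rw [inv_mul_le_iff₀ (by linarith only [hq4R])] at hz
          linarith only [hz]
        have hdecomp := sum_sq_decomp q (by omega) (fun i => X i ω) (Xbar q ω) μ (hXbar q ω)
        rcases lt_or_ge ((Xbar q ω - μ)^2) (δ*σ^2) with hXb | hXb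
        · refine Set.mem_union_left _ (Set.mem_iUnion₂.mpr ⟨q, Finset.mem_Icc.mpr ⟨hqm, hqQ₁⟩, ?_⟩)
          refine Set.mem_union_left _ (Set.mem_union_left _ ?_)
          show ω ∈ Aev q
          simp only [hAdef, Set.mem_setOf_eq, Finset.sum_apply]
          have hsum_apply : ∑ i ∈ Finset.range q, (fun ω' => (Z i ω')^2) ω
              = ∑ i ∈ Finset.range q, (X i ω - μ)^2 := by
            simp [hZdef]
          have hθδ : θ = ε^2 + δ := by rw [hθdef, hδdef]; ring
          rw [hsum_apply, hdecomp, hθδ]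
          have hstep : (q:ℝ)*(Xbar q ω - μ)^2 ≤ (q:ℝ)*(δ*σ^2) :=
            mul_le_mul_of_nonneg_left hXb.le (by positivity)
          linarith only [hWle, hstep, sq_nonneg (ε*σ)]
        · have habs : a*σ ≤ |Xbar q ω - μ| := by
            have h7 : (a*σ)^2 ≤ (Xbar q ω - μ)^2 := by
              rw [mul_pow, ha2]; exact hXb
            calc a*σ = Real.sqrt ((a*σ)^2) := (Real.sqrt_sq (by positivity)).symm
              _ ≤ Real.sqrt ((Xbar q ω - μ)^2) := Real.sqrt_le_sqrt h7
              _ = |Xbar q ω - μ| := Real.sqrt_sq_eq_abs _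
          have hqR0 : (0:ℝ) < (q:ℝ) := by linarith only [hq4R]
          have hXbL : Xbar q ω - μ = (q:ℝ)⁻¹ * (∑ i ∈ Finset.range q, (X i ω - μ)) := by
            rw [hXbar, Finset.sum_sub_distrib, Finset.sum_const, Finset.card_range, nsmul_eq_mul]
            have hqne : (q:ℝ) ≠ 0 := ne_of_gt hqR0
            field_simp
          have hLabs : a*σ*(q:ℝ) ≤ |∑ i ∈ Finset.range q, (X i ω - μ)| := by
            have h8 : |Xbar q ω - μ| = |∑ i ∈ Finset.range q, (X i ω - μ)| / (q:ℝ) := by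
              rw [hXbL, abs_mul, abs_inv, Nat.abs_cast]
              ring
            rw [h8] at habs
            exact (le_div_iff₀ hqR0).mp habs
          have hsum_applyL : (∑ i ∈ Finset.range q, Z i) ω
              = ∑ i ∈ Finset.range q, (X i ω - μ) := by
            simp [hZdef]
          rcases le_abs.mp hLabs with hL | hL
          · refine Set.mem_union_left _
              (Set.mem_iUnion₂.mpr ⟨q, Finset.mem_Icc.mpr ⟨hqm, hqQ₁⟩, ?_⟩)
            refine Set.mem_union_left _ (Set.mem_union_right _ ?_)
            show ω ∈ Bp q
            simp only [hBpdef, Set.mem_setOf_eq]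
            rw [hsum_applyL]; exact hL
          · refine Set.mem_union_left _
              (Set.mem_iUnion₂.mpr ⟨q, Finset.mem_Icc.mpr ⟨hqm, hqQ₁⟩, ?_⟩)
            refine Set.mem_union_right _ ?_
            show ω ∈ Bm q
            simp only [hBmdef, Set.mem_setOf_eq]
            rw [hsum_applyL]; linarith only [hL]
      · -- the defining set is empty
        refine Set.mem_union_right _ ?_
        have h2 : ¬ ((m j : ℝ) + (k : ℝ) * (n₂:ℕ)
            ≥ ρ * S (m j + k * n₂) ω * Real.sqrt (A / c j)) := fun hcontra => hne ⟨n₂, hcontra⟩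
        push_neg at h2
        have hS0 : 0 ≤ S Q₂ ω := by rw [hS]; exact Real.sqrt_nonneg _
        have hchain : 2 * nstar j < S Q₂ ω * Real.sqrt (A / c j) := by
          have e1 : 2 * nstar j ≤ ((n₂:ℕ):ℝ) := Nat.le_ceil _
          have e2 : ((n₂:ℕ):ℝ) ≤ (m j:ℝ) + (k:ℝ)*(n₂:ℕ) := by
            have hk1 : (1:ℝ) ≤ (k:ℝ) := by exact_mod_cast hk
            have hn₂0 : (0:ℝ) ≤ (n₂:ℝ) := Nat.cast_nonneg n₂
            have hm0 : (0:ℝ) ≤ ((m j : ℕ):ℝ) := Nat.cast_nonneg (m j)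
            nlinarith only [hk1, hn₂0, hm0]
          have e3 : ρ * S Q₂ ω * Real.sqrt (A/c j) ≤ S Q₂ ω * Real.sqrt (A/c j) := by
            have h0 : 0 ≤ S Q₂ ω * Real.sqrt (A/c j) := mul_nonneg hS0 (Real.sqrt_nonneg _)
            nlinarith only [h0, hρ1]
          calc 2*nstar j ≤ ((n₂:ℕ):ℝ) := e1
            _ ≤ (m j:ℝ) + (k:ℝ)*(n₂:ℕ) := e2
            _ < ρ * S Q₂ ω * Real.sqrt (A/c j) := h2
            _ ≤ S Q₂ ω * Real.sqrt (A/c j) := e3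
        have hS2σ : 2*σ < S Q₂ ω := by
          rw [hnstar j] at hchain
          nlinarith only [hchain, hsqp]
        have hQ₂4 : 4 ≤ Q₂ := le_trans hmj4 (Nat.le_add_right _ _)
        have hQ₂R : (4:ℝ) ≤ (Q₂:ℝ) := by exact_mod_cast hQ₂4
        have h9 : (2*σ)^2 < ((Q₂:ℝ)-1)⁻¹
            * ∑ i ∈ Finset.range Q₂, (X i ω - Xbar Q₂ ω)^2 := by
          rw [hS] at hS2σ
          exact (Real.lt_sqrt (by positivity)).mp hS2σ
        have hinvpos : (0:ℝ) < ((Q₂:ℝ)-1) := by linarith only [hQ₂R]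
        have hW₂ : 3*σ^2*(Q₂:ℝ) ≤ ∑ i ∈ Finset.range Q₂, (X i ω - Xbar Q₂ ω)^2 := by
          rw [← div_eq_inv_mul] at h9
          have h9' := (lt_div_iff₀ hinvpos).mp h9
          have hσ4 : 0 ≤ σ^2*((Q₂:ℝ)-4) := mul_nonneg (sq_nonneg σ) (by linarith only [hQ₂R])
          linarith only [h9', hσ4]
        have hdecomp2 := sum_sq_decomp Q₂ (by omega) (fun i => X i ω) (Xbar Q₂ ω) μ (hXbar Q₂ ω)
        show ω ∈ Cev
        simp only [hCdef, Set.mem_setOf_eq, Finset.sum_apply]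
        have hsum_apply2 : ∑ i ∈ Finset.range Q₂, (fun ω' => (Z i ω')^2) ω
            = ∑ i ∈ Finset.range Q₂, (X i ω - μ)^2 := by
          simp [hZdef]
        rw [hsum_apply2, hdecomp2]
        have hpos2 : 0 ≤ (Q₂:ℝ)*(Xbar Q₂ ω - μ)^2 :=
          mul_nonneg (Nat.cast_nonneg Q₂) (sq_nonneg _)
        linarith only [hW₂, hpos2]
    -- measure bookkeeping
    have hPE : P {ω | (N j ω : ℝ) ≤ ε * nstar j}
        ≤ (∑ q ∈ Finset.Icc (m j) Q₁, (P (Aev q) + P (Bp q) + P (Bm q))) + P Cev := by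
      refine (measure_mono hincl).trans ?_
      refine (measure_union_le _ _).trans ?_
      refine add_le_add ?_ le_rfl
      refine (measure_biUnion_finset_le _ _).trans ?_
      refine Finset.sum_le_sum (fun q hq => ?_)
      exact (measure_union_le _ _).trans (add_le_add (measure_union_le _ _) le_rfl)
    have hne1 : (∑ q ∈ Finset.Icc (m j) Q₁, (P (Aev q) + P (Bp q) + P (Bm q))) ≠ ⊤ := by
      refine (ENNReal.sum_lt_top.mpr (fun q _ => ?_)).ne
      exact ENNReal.add_lt_top.mpr ⟨ENNReal.add_lt_top.mpr
        ⟨measure_lt_top P _, measure_lt_top P _⟩, measure_lt_top P _⟩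
    have hne2 : P Cev ≠ ⊤ := (measure_lt_top P _).ne
    have hPE' : (P {ω | (N j ω : ℝ) ≤ ε * nstar j}).toReal
        ≤ (∑ q ∈ Finset.Icc (m j) Q₁,
            ((P (Aev q)).toReal + (P (Bp q)).toReal + (P (Bm q)).toReal)) + (P Cev).toReal := by
      have h1 := ENNReal.toReal_mono (by
        exact (ENNReal.add_lt_top.mpr ⟨hne1.lt_top, hne2.lt_top⟩).ne) hPE
      rw [ENNReal.toReal_add hne1 hne2,
        ENNReal.toReal_sum (fun q _ => by
          exact ENNReal.add_ne_top.mpr ⟨ENNReal.add_ne_top.mpr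
            ⟨(measure_lt_top P _).ne, (measure_lt_top P _).ne⟩, (measure_lt_top P _).ne⟩)] at h1
      refine h1.trans (le_of_eq ?_)
      refine congrArg (· + (P Cev).toReal) ?_
      refine Finset.sum_congr rfl (fun q _ => ?_)
      rw [ENNReal.toReal_add (ENNReal.add_ne_top.mpr
        ⟨(measure_lt_top P _).ne, (measure_lt_top P _).ne⟩) (measure_lt_top P _).ne,
        ENNReal.toReal_add (measure_lt_top P _).ne (measure_lt_top P _).ne]
    -- Chernoff bounds
    have hAq : ∀ q : ℕ, (P (Aev q)).toReal ≤ ρ₁^q := by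
      intro q
      have hb := chernoff_sq_lower P Z hZm hZi v hv hZlaw ht₀ q (θ*σ^2*(q:ℝ))
      have h2t₀v : 2*t₀*(v:ℝ) = u := by
        rw [ht₀def, hσ2]; field_simp
      have he : t₀*(θ*σ^2*(q:ℝ)) = (q:ℝ)*(θ*u/2) := by
        rw [ht₀def]; field_simp
      rw [h2t₀v, he, Real.exp_nat_mul, ← mul_pow] at hb
      exact hb
    have hBpq : ∀ q : ℕ, (P (Bp q)).toReal ≤ ρ₂^q := by
      intro q
      have hb := chernoff_lin_upper P Z hZm hZi v hv hZlaw hs0 q (a*σ*(q:ℝ))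
      have he1 : -(s*(a*σ*(q:ℝ))) = (q:ℝ)*(-δ) := by
        rw [hsdef, ← ha2]; field_simp
      have he2 : s^2*(v:ℝ)/2 = δ/2 := by
        rw [hsdef, hσ2, ← ha2]; field_simp
      rw [he1, he2, Real.exp_nat_mul, ← mul_pow] at hb
      refine hb.trans (le_of_eq ?_)
      refine congrFun (congrArg _ ?_) q
      rw [← Real.exp_add, hρ₂def]
      congr 1
      ring
    have hBmq : ∀ q : ℕ, (P (Bm q)).toReal ≤ ρ₂^q := by
      intro q
      have hb := chernoff_lin_lower P Z hZm hZi v hv hZlaw hs0 q (a*σ*(q:ℝ))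
      have he1 : -(s*(a*σ*(q:ℝ))) = (q:ℝ)*(-δ) := by
        rw [hsdef, ← ha2]; field_simp
      have he2 : s^2*(v:ℝ)/2 = δ/2 := by
        rw [hsdef, hσ2, ← ha2]; field_simp
      rw [he1, he2, Real.exp_nat_mul, ← mul_pow] at hb
      refine hb.trans (le_of_eq ?_)
      refine congrFun (congrArg _ ?_) q
      rw [← Real.exp_add, hρ₂def]
      congr 1
      ring
    have hCb : (P Cev).toReal ≤ ρ₃^Q₂ := by
      have hb := chernoff_sq_upper P Z hZm hZi v hv hZlaw ht₃0
        (by rw [ht₃v]; norm_num) Q₂ (3*σ^2*(Q₂:ℝ))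
      have he : -(t₃*(3*σ^2*(Q₂:ℝ))) = (Q₂:ℝ)*(-(3/4)) := by
        rw [ht₃def]; field_simp
      have hs2 : (Real.sqrt (1 - 2*t₃*(v:ℝ)))⁻¹ = Real.sqrt 2 := by
        rw [ht₃v]
        rw [show (1:ℝ) - 1/2 = 2⁻¹ by norm_num, Real.sqrt_inv, inv_inv]
      rw [he, hs2, Real.exp_nat_mul, ← mul_pow] at hb
      exact hb
    -- combine
    have hρ₁b : ρ₁ ≤ ρb := le_max_left _ _
    have hρ₂b : ρ₂ ≤ ρb := (le_max_left ρ₂ ρ₃).trans (le_max_right ρ₁ _)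
    have hρ₃b : ρ₃ ≤ ρb := (le_max_right ρ₂ ρ₃).trans (le_max_right ρ₁ _)
    have hsum : (∑ q ∈ Finset.Icc (m j) Q₁,
          ((P (Aev q)).toReal + (P (Bp q)).toReal + (P (Bm q)).toReal)) + (P Cev).toReal
        ≤ Kbar * ρb^(m j) := by
      have h1 : ∀ q ∈ Finset.Icc (m j) Q₁,
          (P (Aev q)).toReal + (P (Bp q)).toReal + (P (Bm q)).toReal ≤ 3*ρb^q := by
        intro q hq
        have e1 := (hAq q).trans (pow_le_pow_left₀ hρ₁0.le hρ₁b q)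
        have e2 := (hBpq q).trans (pow_le_pow_left₀ hρ₂0.le hρ₂b q)
        have e3 := (hBmq q).trans (pow_le_pow_left₀ hρ₂0.le hρ₂b q)
        linarith only [e1, e2, e3]
      have h2 : (P Cev).toReal ≤ ρb^(m j) := by
        refine (hCb.trans (pow_le_pow_left₀ hρ₃0.le hρ₃b Q₂)).trans ?_
        exact pow_le_pow_of_le_one hρb0.le hρb1.le (Nat.le_add_right _ _)
      have h3 : ∑ q ∈ Finset.Icc (m j) Q₁, (3:ℝ)*ρb^q ≤ 3*(ρb^(m j) * (1-ρb)⁻¹) := by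
        rw [← Finset.mul_sum]
        exact mul_le_mul_of_nonneg_left (geom_tail hρb0.le hρb1 _ _) (by norm_num)
      have h4 := Finset.sum_le_sum h1
      have h5 : Kbar * ρb^(m j) = 3*(ρb^(m j) * (1-ρb)⁻¹) + ρb^(m j) := by
        rw [hKdef]; ring
      rw [h5]
      have h4' := h4
      linarith only [h4', h2, h3]
    exact hPE'.trans hsum
  -- asymptotic glue
  have hmTop : Tendsto (fun j => m j) atTop atTop := by
    apply tendsto_atTop_mono (fun j => ?_) hm₀Top
    rw [hm j]
    calc m₀ j ≤ m₀ j * k := Nat.le_mul_of_pos_right _ (by omega)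
      _ ≤ m₀ j * k + 1 := Nat.le_succ _
  have hev4 : ∀ᶠ j in atTop, 4 ≤ m j := hmTop.eventually_ge_atTop 4
  have step1 : (fun j => (P {ω | (N j ω : ℝ) ≤ ε * nstar j}).toReal) =O[atTop]
      (fun j => ρb ^ (m j)) := by
    rw [Asymptotics.isBigO_iff]
    refine ⟨Kbar, ?_⟩
    filter_upwards [hev4] with j hj
    rw [Real.norm_eq_abs, Real.norm_eq_abs, abs_of_nonneg ENNReal.toReal_nonneg,
      abs_of_nonneg (pow_nonneg hρb0.le _)]
    exact (key j hj).trans (le_of_eq rfl)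
  have gN : (fun n : ℕ => ρb ^ n) =O[atTop] (fun n : ℕ => (n:ℝ) ^ (-(γ/2))) := by
    set p : ℕ := ⌈γ/2⌉₊ with hpdef
    have hsumm : Summable (fun n : ℕ => (n:ℝ)^p * ρb^n) := by
      have h := summable_norm_pow_mul_geometric_of_norm_lt_one (R := ℝ) p
        (r := ρb) (by rw [Real.norm_eq_abs, abs_of_nonneg hρb0.le]; exact hρb1)
      exact h.of_norm
    have htend := hsumm.tendsto_atTop_zero
    have hev : ∀ᶠ n : ℕ in atTop, (n:ℝ)^p * ρb^n ≤ 1 :=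
      htend.eventually (eventually_le_nhds one_pos)
    rw [Asymptotics.isBigO_iff]
    refine ⟨1, ?_⟩
    filter_upwards [hev, eventually_ge_atTop 1] with n h1 h2
    have hn1 : (1:ℝ) ≤ (n:ℝ) := by exact_mod_cast h2
    have hppos : (0:ℝ) < (n:ℝ)^p := by positivity
    have hp1 : ρb^n ≤ ((n:ℝ)^p)⁻¹ := by
      rw [← one_div, le_div_iff₀ hppos]
      calc ρb^n * (n:ℝ)^p = (n:ℝ)^p * ρb^n := by ring
        _ ≤ 1 := h1
    have hp2 : ((n:ℝ)^p)⁻¹ ≤ (n:ℝ)^(-(γ/2)) := by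
      rw [← Real.rpow_natCast (n:ℝ) p, ← Real.rpow_neg (by linarith only [hn1])]
      refine Real.rpow_le_rpow_of_exponent_le hn1 ?_
      have := Nat.le_ceil (γ/2)
      rw [← hpdef] at this
      linarith only [this]
    rw [Real.norm_eq_abs, Real.norm_eq_abs, abs_of_nonneg (pow_nonneg hρb0.le n),
      abs_of_nonneg (Real.rpow_nonneg (Nat.cast_nonneg n) _), one_mul]
    exact hp1.trans hp2
  have step2 : (fun j => ρb ^ (m j)) =O[atTop] (fun j => ((m j : ℕ):ℝ) ^ (-(γ/2))) :=
    gN.comp_tendsto hmTop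
  have step3 : (fun j => ((m j : ℕ):ℝ) ^ (-(γ/2))) =O[atTop]
      (fun j => (nstar j) ^ (-(γ/(2*r)))) := by
    obtain ⟨C, hC0, hCb⟩ := hnO.exists_pos
    rw [Asymptotics.isBigOWith_iff] at hCb
    rw [Asymptotics.isBigO_iff]
    refine ⟨C ^ (γ/(2*r)), ?_⟩
    filter_upwards [hCb] with j hj
    have hm1 : (1:ℝ) ≤ ((m j : ℕ):ℝ) := by
      have h0 : 1 ≤ m j := by rw [hm j]; omega
      exact_mod_cast h0
    have hm0' : (0:ℝ) ≤ ((m j : ℕ):ℝ) := by linarith only [hm1]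
    have hns0 : 0 < nstar j := by
      rw [hnstar j]
      have h0 := Real.sqrt_pos.mpr (div_pos hA (hc j))
      positivity
    have hmr0 : (0:ℝ) ≤ ((m j:ℕ):ℝ) ^ r := Real.rpow_nonneg hm0' r
    rw [Real.norm_eq_abs, Real.norm_eq_abs, abs_of_nonneg hns0.le,
      abs_of_nonneg hmr0] at hj
    have he0 : (0:ℝ) ≤ γ/(2*r) := div_nonneg (by linarith only [hγ]) (by linarith only [hr])
    have h1 : nstar j ^ (γ/(2*r)) ≤ (C * ((m j:ℕ):ℝ)^r) ^ (γ/(2*r)) :=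
      Real.rpow_le_rpow hns0.le hj he0
    have h2 : (C * ((m j:ℕ):ℝ)^r) ^ (γ/(2*r)) = C^(γ/(2*r)) * ((m j:ℕ):ℝ)^(γ/2) := by
      rw [Real.mul_rpow hC0.le hmr0, ← Real.rpow_mul hm0']
      have hrne : r ≠ 0 := by intro h0; rw [h0] at hr; norm_num at hr
      have he : r * (γ/(2*r)) = γ/2 := by field_simp
      rw [he]
    rw [h2] at h1
    rw [Real.norm_eq_abs, Real.norm_eq_abs,
      abs_of_nonneg (Real.rpow_nonneg hm0' _),
      abs_of_nonneg (Real.rpow_nonneg hns0.le _),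
      Real.rpow_neg hm0', Real.rpow_neg hns0.le]
    have hCe : (0:ℝ) < C ^ (γ/(2*r)) := Real.rpow_pos_of_pos hC0 _
    have h6 : (C^(γ/(2*r)))⁻¹ * nstar j ^(γ/(2*r)) ≤ ((m j:ℕ):ℝ)^(γ/2) := by
      rw [inv_mul_le_iff₀ hCe]
      exact h1
    calc (((m j:ℕ):ℝ)^(γ/2))⁻¹ ≤ ((C^(γ/(2*r)))⁻¹ * nstar j ^(γ/(2*r)))⁻¹ := by
          apply inv_anti₀ ?_ h6
          positivity
      _ = C^(γ/(2*r)) * (nstar j ^(γ/(2*r)))⁻¹ := by rw [mul_inv, inv_inv]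
  have final := step1.trans (step2.trans step3)
  have hexp : (fun j => (nstar j) ^ (-(γ/(2*r)))) = fun j => (nstar j) ^ (-(γ/(2*r))) := rfl
  exact final
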